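/- Fix ρ > 0, n ≥ 1, z > 0 and strictly positive rates (aᵢ)_{i≥1}, (bᵢ)_{i≥2}, with Q₁ = 1 and Qᵢ = ∏_{j=1}^{i-1} aⱼ/bⱼ₊₁ for i ≥ 2. Define Π(c) = (1/B) ∏_{i=1}^{n} ((n/ρ)Qᵢzⁱ)^{(n/ρ)cᵢ}/((n/ρ)cᵢ)! · e^{−(n/ρ)Qᵢzⁱ} for c in E_ρ^n (B a normalizing constant), and transition rates A₁(c) = a₁c₁(c₁ − ρ/n), Aᵢ(c) = aᵢc₁cᵢ for i ≥ 2, Bᵢ(c) = bᵢcᵢ for i ≥ 2, with jump vector Δᵢ = e_{i+1} − eᵢ − e₁. Then the detailed balance condition holds: for all c ∈ E_ρ^n and i ≥ 1, Aᵢ(c)·Π(c) = B_{i+1}(c + (ρ/n)Δᵢ)·Π(c + (ρ/n)Δᵢ). -/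

import Mathlib

open Classical

/-- Membership in the state space E_ρ^n. -/
def memE (ρ : ℝ) (n : ℕ) (c : ℕ → ℝ) : Prop :=
  (∀ i : ℕ, ∃ k : ℕ, ((n : ℝ) / ρ) * c i = k) ∧
  (∀ i : ℕ, n < i → c i = 0) ∧
  (∑' i : ℕ, (i : ℝ) * c i = ρ)

open Classical in
/-- The stationary distribution candidate Π (unnormalized by B), extended by 0 outside
E_ρ^n; factorials of the real quantities (n/ρ)cᵢ are expressed via the Gamma function. -/
noncomputable def PiDist (ρ z B : ℝ) (n : ℕ) (Q : ℕ → ℝ) (c : ℕ → ℝ) : ℝ :=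
  if memE ρ n c then
    (1 / B) * ∏ i ∈ Finset.Icc 1 n,
      ((((n : ℝ) / ρ) * Q i * z ^ i) ^ (((n : ℝ) / ρ) * c i)
        / Real.Gamma (((n : ℝ) / ρ) * c i + 1)
        * Real.exp (-(((n : ℝ) / ρ) * Q i * z ^ i)))
  else 0

noncomputable def gfun (l : ℝ) (k : ℕ) : ℝ := l ^ k / k.factorial * Real.exp (-l)

lemma gfun_pos {l : ℝ} (hl : 0 < l) (k : ℕ) : 0 < gfun l k := by
  unfold gfun
  have : (0:ℝ) < k.factorial := by exact_mod_cast k.factorial_pos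
  positivity

lemma gfun_succ (l : ℝ) (k : ℕ) : gfun l (k + 1) = gfun l k * (l / (k + 1)) := by
  unfold gfun
  have h1 : ((k:ℝ) + 1) ≠ 0 := by positivity
  have h2 : ((k.factorial : ℝ)) ≠ 0 := by exact_mod_cast k.factorial_ne_zero
  rw [Nat.factorial_succ, pow_succ]
  push_cast
  field_simp

lemma gfun_pred (l : ℝ) (k : ℕ) (hk : 1 ≤ k) : gfun l k = gfun l (k - 1) * (l / k) := by
  conv_lhs => rw [show k = (k - 1) + 1 from by omega]
  rw [gfun_succ]
  rw [show ((k - 1 : ℕ) : ℝ) + 1 = (k : ℝ) from by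
    rw [Nat.cast_sub hk]; push_cast; ring]

lemma gfun_ratio_succ (l : ℝ) (hl : 0 < l) (k : ℕ) :
    gfun l (k + 1) / gfun l k = l / ((k : ℝ) + 1) := by
  rw [gfun_succ]
  exact mul_div_cancel_left₀ _ (ne_of_gt (gfun_pos hl k))

lemma gfun_ratio_pred (l : ℝ) (hl : 0 < l) (k : ℕ) (hk : 1 ≤ k) :
    gfun l (k - 1) / gfun l k = (k : ℝ) / l := by
  rw [gfun_pred l k hk]
  have h0 : gfun l (k - 1) ≠ 0 := ne_of_gt (gfun_pos hl _)
  have hk' : ((k : ℝ)) ≠ 0 := Nat.cast_ne_zero.mpr (by omega)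
  have hl' : l ≠ 0 := ne_of_gt hl
  field_simp

lemma gfun_ratio_pred2 (l : ℝ) (hl : 0 < l) (k : ℕ) (hk : 2 ≤ k) :
    gfun l (k - 2) / gfun l k = ((k : ℝ) * ((k : ℝ) - 1)) / (l * l) := by
  rw [gfun_pred l k (by omega), gfun_pred l (k - 1) (by omega),
    show k - 1 - 1 = k - 2 from by omega]
  have hcast : ((k - 1 : ℕ) : ℝ) = (k : ℝ) - 1 := by
    rw [Nat.cast_sub (by omega)]; norm_num
  rw [hcast]
  have h0 : gfun l (k - 2) ≠ 0 := ne_of_gt (gfun_pos hl _)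
  have hk' : ((k : ℝ)) ≠ 0 := Nat.cast_ne_zero.mpr (by omega)
  have hk2 : (2 : ℝ) ≤ (k : ℝ) := by exact_mod_cast hk
  have hk1' : (k : ℝ) - 1 ≠ 0 := by nlinarith
  have hl' : l ≠ 0 := ne_of_gt hl
  field_simp

lemma prod_change (s T : Finset ℕ) (hT : T ⊆ s) (G G' : ℕ → ℝ)
    (hsame : ∀ j ∈ s, j ∉ T → G' j = G j) (hne : ∀ j ∈ s, G j ≠ 0) :
    ∏ j ∈ s, G' j = (∏ j ∈ s, G j) * ∏ j ∈ T, (G' j / G j) := by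
  have h1 : ∏ j ∈ T, (G' j / G j) = ∏ j ∈ s, (G' j / G j) :=
    (Finset.prod_subset (f := fun j => G' j / G j) hT (fun j hjs hjT => by
      rw [hsame j hjs hjT, div_self (hne j hjs)]))
  rw [h1]
  rw [← Finset.prod_mul_distrib]
  exact Finset.prod_congr rfl fun j hj => by
    rw [mul_comm, div_mul_cancel₀ _ (hne j hj)]

lemma memE_nonneg {ρ : ℝ} {n : ℕ} {c : ℕ → ℝ} (hρ : 0 < ρ) (hn : 0 < n)
    (hc : memE ρ n c) : ∀ j, 0 ≤ c j := by
  intro j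
  obtain ⟨k, hk⟩ := hc.1 j
  have hn' : (0:ℝ) < n := by exact_mod_cast hn
  have hκ : 0 < (n:ℝ)/ρ := div_pos hn' hρ
  nlinarith [(Nat.cast_nonneg k : (0:ℝ) ≤ k)]

lemma memE_fsum {n : ℕ} {c : ℕ → ℝ} (hc2 : ∀ i, n < i → c i = 0) :
    (∑' i : ℕ, (i:ℝ) * c i) = ∑ i ∈ Finset.range (n+1), (i:ℝ) * c i := by
  apply tsum_eq_sum
  intro j hj
  simp only [Finset.mem_range, not_lt] at hj
  rw [hc2 j (by omega), mul_zero]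

lemma PiDist_eq (ρ z B : ℝ) (n : ℕ) (Q : ℕ → ℝ) (c : ℕ → ℝ)
    (hmem : memE ρ n c) (m : ℕ → ℕ) (hm : ∀ j, ((n:ℝ)/ρ) * c j = m j) :
    PiDist ρ z B n Q c
      = (1 / B) * ∏ j ∈ Finset.Icc 1 n, gfun (((n:ℝ)/ρ) * Q j * z ^ j) (m j) := by
  rw [PiDist, if_pos hmem]
  congr 1
  refine Finset.prod_congr rfl fun j _ => ?_
  rw [hm j, gfun, Real.rpow_natCast, Real.Gamma_nat_eq_factorial]

lemma Qrec (a b Q : ℕ → ℝ) (hQ1 : Q 1 = 1)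
    (hQ : ∀ i : ℕ, 2 ≤ i → Q i = ∏ j ∈ Finset.Icc 1 (i - 1), a j / b (j + 1)) :
    ∀ i : ℕ, 1 ≤ i → Q (i + 1) = Q i * (a i / b (i + 1)) := by
  intro i hi
  rcases eq_or_lt_of_le hi with h | h
  · rw [← h, hQ 2 (by norm_num), hQ1]
    norm_num
  · have h2 : 2 ≤ i := h
    rw [hQ (i+1) (by omega), hQ i h2, show i + 1 - 1 = (i - 1) + 1 from by omega,
      Finset.prod_Icc_succ_top (by omega), show i - 1 + 1 = i from by omega]

lemma Qpos (a b Q : ℕ → ℝ) (ha : ∀ i, 1 ≤ i → 0 < a i) (hb : ∀ i, 2 ≤ i → 0 < b i)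
    (hQ1 : Q 1 = 1)
    (hQ : ∀ i : ℕ, 2 ≤ i → Q i = ∏ j ∈ Finset.Icc 1 (i - 1), a j / b (j + 1)) :
    ∀ i : ℕ, 1 ≤ i → 0 < Q i := by
  intro i hi
  rcases eq_or_lt_of_le hi with h | h
  · rw [← h, hQ1]; norm_num
  · rw [hQ i h]
    refine Finset.prod_pos fun j hj => ?_
    rw [Finset.mem_Icc] at hj
    exact div_pos (ha j hj.1) (hb (j+1) (by omega))

set_option maxHeartbeats 1000000 in
theorem stmt10 (ρ z B : ℝ) (hρ : 0 < ρ) (hz : 0 < z) (hB : 0 < B)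
    (n : ℕ) (hn : 1 ≤ n)
    (a b : ℕ → ℝ) (ha : ∀ i, 1 ≤ i → 0 < a i) (hb : ∀ i, 2 ≤ i → 0 < b i)
    (Q : ℕ → ℝ) (hQ1 : Q 1 = 1)
    (hQ : ∀ i : ℕ, 2 ≤ i → Q i = ∏ j ∈ Finset.Icc 1 (i - 1), a j / b (j + 1))
    (c : ℕ → ℝ) (hc : memE ρ n c) :
    ∀ i : ℕ, 1 ≤ i →
      (if i = 1 then a 1 * (c 1 * (c 1 - ρ / n)) else a i * (c 1 * c i)) * PiDist ρ z B n Q c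
      = b (i + 1) *
          ((fun j : ℕ => c j + (ρ / n) *
            ((if j = i + 1 then (1:ℝ) else 0) - (if j = i then 1 else 0)
              - (if j = 1 then 1 else 0))) (i + 1)) *
        PiDist ρ z B n Q
          (fun j : ℕ => c j + (ρ / n) *
            ((if j = i + 1 then (1:ℝ) else 0) - (if j = i then 1 else 0)
              - (if j = 1 then 1 else 0))) := by
  intro i hi
  have hn' : (0:ℝ) < n := by exact_mod_cast hn
  have hκ : (0:ℝ) < (n:ℝ)/ρ := div_pos hn' hρ
  have hρn : (0:ℝ) < ρ/(n:ℝ) := div_pos hρ hn'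
  have hκρ : ((n:ℝ)/ρ) * (ρ/(n:ℝ)) = 1 := by field_simp
  obtain ⟨hc1, hc2, hc3⟩ := hc
  choose m hm using hc1
  set c' : ℕ → ℝ := fun j : ℕ => c j + (ρ / n) *
      ((if j = i + 1 then (1:ℝ) else 0) - (if j = i then 1 else 0)
        - (if j = 1 then 1 else 0)) with hc'
  have hcj : ∀ j, c j = (m j : ℝ) * (ρ / n) := by
    intro j
    calc c j = (((n:ℝ)/ρ) * (ρ/(n:ℝ))) * c j := by rw [hκρ, one_mul]
    _ = (ρ/(n:ℝ)) * (((n:ℝ)/ρ) * c j) := by ring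
    _ = (ρ/(n:ℝ)) * (m j : ℝ) := by rw [hm j]
    _ = (m j : ℝ) * (ρ/n) := by ring
  have hcn : ∀ j, 0 ≤ c j := memE_nonneg hρ (by omega) ⟨fun j => ⟨m j, hm j⟩, hc2, hc3⟩
  have hsum : ∑ j ∈ Finset.range (n+1), (j:ℝ) * c j = ρ := by
    rw [← memE_fsum hc2]; exact hc3
  -- base formula for (n/ρ) * c' j
  have hbase : ∀ j, ((n:ℝ)/ρ) * c' j = (m j : ℝ) +
      ((if j = i + 1 then (1:ℝ) else 0) - (if j = i then 1 else 0)
        - (if j = 1 then 1 else 0)) := by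
    intro j
    simp only [hc']
    rw [mul_add, hm j, ← mul_assoc, hκρ, one_mul]
  by_cases hi1 : i = 1
  · subst hi1
    rw [if_pos rfl]
    by_cases hm1 : 2 ≤ m 1
    · -- main case, i = 1
      have h2n : 2 ≤ n := by
        by_contra hcon
        have hn1 : n = 1 := by omega
        have hs : c 1 = ρ := by
          have h := hsum
          rw [hn1] at h
          simpa [Finset.sum_range_succ] using h
        have h := hm 1
        rw [hn1, hs] at h
        have h2 : (m 1 : ℝ) = 1 := by
          rw [← h]
          norm_num
          field_simp
        have : m 1 = 1 := by exact_mod_cast h2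
        omega
      set m' : ℕ → ℕ := fun j => if j = 1 + 1 then m j + 1 else
          if j = 1 then m j - 2 else m j with hm'def
      have hm' : ∀ j, ((n:ℝ)/ρ) * c' j = (m' j : ℝ) := by
        intro j
        rw [hbase j]
        simp only [hm'def]
        by_cases h1 : j = 1 + 1
        · simp only [h1, if_pos rfl, if_neg (show (1+1 : ℕ) ≠ 1 from by omega)]
          push_cast; ring
        · by_cases h2 : j = 1
          · simp only [h2, if_neg (show (1:ℕ) ≠ 1 + 1 from by omega), if_pos rfl, if_true]
            rw [Nat.cast_sub (by omega : 2 ≤ m 1)]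
            push_cast; ring
          · simp only [if_neg h1, if_neg h2]
            push_cast; ring
      have hzero' : ∀ j, n < j → c' j = 0 := by
        intro j hj
        have e1 : j ≠ 1 + 1 := by omega
        have e2 : j ≠ 1 := by omega
        simp only [hc', if_neg e1, if_neg e2]
        rw [hc2 j hj]; ring
      have hsum' : (∑' j : ℕ, (j:ℝ) * c' j) = ρ := by
        rw [memE_fsum hzero']
        have e : ∀ j : ℕ, (j:ℝ) * c' j = (j:ℝ) * c j +
            (ρ/n) * ((if j = 1+1 then (j:ℝ) else 0) - (if j = 1 then (j:ℝ) else 0)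
              - (if j = 1 then (j:ℝ) else 0)) := by
          intro j
          simp only [hc']
          split_ifs <;> ring
        rw [Finset.sum_congr rfl fun j _ => e j, Finset.sum_add_distrib, hsum,
          ← Finset.mul_sum]
        have e2m : (1+1 : ℕ) ∈ Finset.range (n+1) := Finset.mem_range.mpr (by omega)
        have e1m : (1 : ℕ) ∈ Finset.range (n+1) := Finset.mem_range.mpr (by omega)
        simp only [Finset.sum_sub_distrib, Finset.sum_ite_eq', e2m, e1m, if_true]
        push_cast; ring
      have hmem' : memE ρ n c' := ⟨fun j => ⟨m' j, hm' j⟩, hzero', hsum'⟩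
      have hQpos := Qpos a b Q ha hb hQ1 hQ
      have hLpos : ∀ j, 1 ≤ j → 0 < ((n:ℝ)/ρ) * Q j * z ^ j := fun j hj =>
        mul_pos (mul_pos hκ (hQpos j hj)) (pow_pos hz j)
      have hP : PiDist ρ z B n Q c
          = (1/B) * ∏ j ∈ Finset.Icc 1 n, gfun (((n:ℝ)/ρ) * Q j * z ^ j) (m j) :=
        PiDist_eq ρ z B n Q c ⟨fun j => ⟨m j, hm j⟩, hc2, hc3⟩ m hm
      have hP' : PiDist ρ z B n Q c'
          = (1/B) * ∏ j ∈ Finset.Icc 1 n, gfun (((n:ℝ)/ρ) * Q j * z ^ j) (m' j) :=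
        PiDist_eq ρ z B n Q c' hmem' m' hm'
      have hGne : ∀ j ∈ Finset.Icc 1 n, gfun (((n:ℝ)/ρ) * Q j * z ^ j) (m j) ≠ 0 := by
        intro j hj
        rw [Finset.mem_Icc] at hj
        exact ne_of_gt (gfun_pos (hLpos j hj.1) _)
      have hprod : (∏ j ∈ Finset.Icc 1 n, gfun (((n:ℝ)/ρ) * Q j * z ^ j) (m' j))
          = (∏ j ∈ Finset.Icc 1 n, gfun (((n:ℝ)/ρ) * Q j * z ^ j) (m j))
            * ∏ j ∈ ({1, 1+1} : Finset ℕ),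
              (gfun (((n:ℝ)/ρ) * Q j * z ^ j) (m' j)
                / gfun (((n:ℝ)/ρ) * Q j * z ^ j) (m j)) := by
        refine prod_change _ _ ?_ _ _ ?_ hGne
        · intro x hx
          simp only [Finset.mem_insert, Finset.mem_singleton] at hx
          rw [Finset.mem_Icc]; omega
        · intro j hjs hjT
          simp only [Finset.mem_insert, Finset.mem_singleton, not_or] at hjT
          simp only [hm'def, if_neg hjT.2, if_neg hjT.1]
      have hm'1 : m' 1 = m 1 - 2 := by
        norm_num [hm'def]
      have hm'2 : m' (1+1) = m (1+1) + 1 := by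
        norm_num [hm'def]
      have hT : (∏ j ∈ ({1, 1+1} : Finset ℕ),
            (gfun (((n:ℝ)/ρ) * Q j * z ^ j) (m' j)
              / gfun (((n:ℝ)/ρ) * Q j * z ^ j) (m j)))
          = ((m 1 : ℝ) * ((m 1 : ℝ) - 1))
              / ((((n:ℝ)/ρ) * Q 1 * z ^ 1) * (((n:ℝ)/ρ) * Q 1 * z ^ 1))
            * ((((n:ℝ)/ρ) * Q (1+1) * z ^ (1+1)) / ((m (1+1) : ℝ) + 1)) := by
        rw [Finset.prod_insert (by norm_num), Finset.prod_singleton, hm'1, hm'2,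
          gfun_ratio_pred2 _ (hLpos 1 le_rfl) _ hm1,
          gfun_ratio_succ _ (hLpos (1+1) (by omega)) _]
      have hval : c' (1+1) = ((m (1+1) : ℝ) + 1) * (ρ/n) := by
        have h := hm' (1+1)
        rw [hm'2] at h
        calc c' (1+1) = ((((n:ℝ)/ρ) * (ρ/(n:ℝ)))) * c' (1+1) := by rw [hκρ, one_mul]
        _ = (ρ/(n:ℝ)) * (((n:ℝ)/ρ) * c' (1+1)) := by ring
        _ = (ρ/(n:ℝ)) * ((m (1+1) : ℝ) + 1) := by rw [h]; push_cast; ring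
        _ = ((m (1+1) : ℝ) + 1) * (ρ/n) := by ring
      rw [hP, hP', hprod, hT, hval, hcj 1, Qrec a b Q hQ1 hQ 1 le_rfl, hQ1]
      have hb2 : b (1+1) ≠ 0 := ne_of_gt (hb (1+1) (by omega))
      have hz' : z ≠ 0 := ne_of_gt hz
      have hm1ne : (m 1 : ℝ) ≠ 0 := Nat.cast_ne_zero.mpr (by omega)
      have hm2ne : (m (1+1) : ℝ) + 1 ≠ 0 := by positivity
      have hρ' : ρ ≠ 0 := ne_of_gt hρ
      have hnne : (n:ℝ) ≠ 0 := ne_of_gt hn'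
      have hB' : B ≠ 0 := ne_of_gt hB
      field_simp
    · -- degenerate case, i = 1
      have hA : c 1 * (c 1 - ρ / ↑n) = 0 := by
        have h01 : m 1 = 0 ∨ m 1 = 1 := by omega
        rcases h01 with h | h <;> rw [hcj 1, h] <;> push_cast <;> ring
      have hnot : ¬ memE ρ n c' := by
        intro hmem
        have h0 := memE_nonneg hρ (by omega) hmem 1
        have hc'1 : c' 1 = c 1 - 2 * (ρ/n) := by
          simp only [hc', if_neg (show (1:ℕ) ≠ 1 + 1 from by omega), if_pos rfl, if_true]
          ring
        rw [hc'1, hcj 1] at h0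
        have hm1R : (m 1 : ℝ) ≤ 1 := by exact_mod_cast (by omega : m 1 ≤ 1)
        nlinarith
      rw [hA, show PiDist ρ z B n Q c' = 0 from by rw [PiDist, if_neg hnot]]
      ring
  · -- i ≥ 2
    have hi2 : 2 ≤ i := by omega
    rw [if_neg hi1]
    by_cases hdeg : m 1 = 0 ∨ m i = 0
    · -- degenerate case
      have hA : c 1 * c i = 0 := by
        rcases hdeg with h | h
        · rw [hcj 1, h]; push_cast; ring
        · rw [hcj i, h]; push_cast; ring
      have hnot : ¬ memE ρ n c' := by
        intro hmem
        rcases hdeg with h | h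
        · have h0 := memE_nonneg hρ (by omega) hmem 1
          have hc'1 : c' 1 = c 1 - ρ/n := by
            simp only [hc', if_neg (show (1:ℕ) ≠ i + 1 from by omega),
              if_neg (show (1:ℕ) ≠ i from by omega), if_pos rfl, if_true]
            ring
          rw [hc'1, hcj 1, h] at h0
          push_cast at h0
          nlinarith
        · have h0 := memE_nonneg hρ (by omega) hmem i
          have hc'i : c' i = c i - ρ/n := by
            simp only [hc', if_neg (show i ≠ i + 1 from by omega),
              if_neg (show i ≠ 1 from by omega), if_pos rfl, if_true]
            ring
          rw [hc'i, hcj i, h] at h0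
          push_cast at h0
          nlinarith
      rw [hA, show PiDist ρ z B n Q c' = 0 from by rw [PiDist, if_neg hnot]]
      ring
    · -- main case, i ≥ 2
      have hm1 : 1 ≤ m 1 := by omega
      have hmi : 1 ≤ m i := by omega
      have hin : i + 1 ≤ n := by
        by_contra hcon
        have hiln : i ≤ n := by
          by_contra hcon2
          have h0 := hc2 i (by omega)
          rw [hcj i] at h0
          have : (m i : ℝ) = 0 := by
            have := mul_eq_zero.mp h0
            rcases this with h | h
            · exact h
            · exact absurd h (ne_of_gt hρn)
          have : m i = 0 := by exact_mod_cast this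
          omega
        have hieq : i = n := by omega
        have hpair : (1:ℝ) * c 1 + (n:ℝ) * c n ≤ ∑ j ∈ Finset.range (n+1), (j:ℝ) * c j := by
          have hsub : ({1, n} : Finset ℕ) ⊆ Finset.range (n+1) := by
            intro x hx
            simp only [Finset.mem_insert, Finset.mem_singleton] at hx
            rw [Finset.mem_range]; omega
          have hle := Finset.sum_le_sum_of_subset_of_nonneg hsub
            (fun j _ _ => mul_nonneg (Nat.cast_nonneg j) (hcn j))
          calc (1:ℝ) * c 1 + (n:ℝ) * c n
              = ∑ j ∈ ({1, n} : Finset ℕ), (j:ℝ) * c j := by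
                rw [Finset.sum_pair (show (1:ℕ) ≠ n from by omega)]
                norm_num
          _ ≤ _ := hle
        rw [hsum] at hpair
        have hc1' : ρ/(n:ℝ) ≤ c 1 := by
          rw [hcj 1]
          nlinarith [show (1:ℝ) ≤ (m 1 : ℝ) from by exact_mod_cast hm1]
        have hmn : 1 ≤ m n := hieq ▸ hmi
        have hcn' : ρ/(n:ℝ) ≤ c n := by
          rw [hcj n]
          nlinarith [show (1:ℝ) ≤ (m n : ℝ) from by exact_mod_cast hmn]
        have hnρ : (n:ℝ) * (ρ/n) = ρ := by field_simp
        have h5 : (n:ℝ) * (ρ/n) ≤ (n:ℝ) * c n := mul_le_mul_of_nonneg_left hcn' (le_of_lt hn')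
        rw [hnρ] at h5
        linarith
      set m' : ℕ → ℕ := fun j => if j = i + 1 then m j + 1 else
          if j = i then m j - 1 else if j = 1 then m j - 1 else m j with hm'def
      have hm' : ∀ j, ((n:ℝ)/ρ) * c' j = (m' j : ℝ) := by
        intro j
        rw [hbase j]
        simp only [hm'def]
        by_cases h1 : j = i + 1
        · simp only [h1, if_pos rfl, if_neg (show i + 1 ≠ i from by omega),
            if_neg (show i + 1 ≠ 1 from by omega), if_true]
          push_cast; ring
        · by_cases h2 : j = i
          · simp only [h2, if_neg (show i ≠ i + 1 from by omega), if_pos rfl,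
              if_neg (show i ≠ 1 from by omega), if_true]
            rw [Nat.cast_sub hmi]
            push_cast; ring
          · by_cases h3 : j = 1
            · simp only [h3, if_neg (show (1:ℕ) ≠ i + 1 from by omega),
                if_neg (show (1:ℕ) ≠ i from by omega), if_pos rfl, if_true]
              rw [Nat.cast_sub hm1]
              push_cast; ring
            · simp only [if_neg h1, if_neg h2, if_neg h3]
              push_cast; ring
      have hzero' : ∀ j, n < j → c' j = 0 := by
        intro j hj
        simp only [hc', if_neg (show j ≠ i + 1 from by omega),
          if_neg (show j ≠ i from by omega), if_neg (show j ≠ 1 from by omega)]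
        rw [hc2 j hj]; ring
      have hsum' : (∑' j : ℕ, (j:ℝ) * c' j) = ρ := by
        rw [memE_fsum hzero']
        have e : ∀ j : ℕ, (j:ℝ) * c' j = (j:ℝ) * c j +
            (ρ/n) * ((if j = i+1 then (j:ℝ) else 0) - (if j = i then (j:ℝ) else 0)
              - (if j = 1 then (j:ℝ) else 0)) := by
          intro j
          simp only [hc']
          split_ifs <;> ring
        rw [Finset.sum_congr rfl fun j _ => e j, Finset.sum_add_distrib, hsum,
          ← Finset.mul_sum]
        have e2m : (i+1 : ℕ) ∈ Finset.range (n+1) := Finset.mem_range.mpr (by omega)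
        have eim : (i : ℕ) ∈ Finset.range (n+1) := Finset.mem_range.mpr (by omega)
        have e1m : (1 : ℕ) ∈ Finset.range (n+1) := Finset.mem_range.mpr (by omega)
        simp only [Finset.sum_sub_distrib, Finset.sum_ite_eq', e2m, eim, e1m, if_true]
        push_cast; ring
      have hmem' : memE ρ n c' := ⟨fun j => ⟨m' j, hm' j⟩, hzero', hsum'⟩
      have hQpos := Qpos a b Q ha hb hQ1 hQ
      have hLpos : ∀ j, 1 ≤ j → 0 < ((n:ℝ)/ρ) * Q j * z ^ j := fun j hj =>
        mul_pos (mul_pos hκ (hQpos j hj)) (pow_pos hz j)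
      have hP : PiDist ρ z B n Q c
          = (1/B) * ∏ j ∈ Finset.Icc 1 n, gfun (((n:ℝ)/ρ) * Q j * z ^ j) (m j) :=
        PiDist_eq ρ z B n Q c ⟨fun j => ⟨m j, hm j⟩, hc2, hc3⟩ m hm
      have hP' : PiDist ρ z B n Q c'
          = (1/B) * ∏ j ∈ Finset.Icc 1 n, gfun (((n:ℝ)/ρ) * Q j * z ^ j) (m' j) :=
        PiDist_eq ρ z B n Q c' hmem' m' hm'
      have hGne : ∀ j ∈ Finset.Icc 1 n, gfun (((n:ℝ)/ρ) * Q j * z ^ j) (m j) ≠ 0 := by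
        intro j hj
        rw [Finset.mem_Icc] at hj
        exact ne_of_gt (gfun_pos (hLpos j hj.1) _)
      have hprod : (∏ j ∈ Finset.Icc 1 n, gfun (((n:ℝ)/ρ) * Q j * z ^ j) (m' j))
          = (∏ j ∈ Finset.Icc 1 n, gfun (((n:ℝ)/ρ) * Q j * z ^ j) (m j))
            * ∏ j ∈ ({1, i, i+1} : Finset ℕ),
              (gfun (((n:ℝ)/ρ) * Q j * z ^ j) (m' j)
                / gfun (((n:ℝ)/ρ) * Q j * z ^ j) (m j)) := by
        refine prod_change _ _ ?_ _ _ ?_ hGne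
        · intro x hx
          simp only [Finset.mem_insert, Finset.mem_singleton] at hx
          rw [Finset.mem_Icc]; omega
        · intro j hjs hjT
          simp only [Finset.mem_insert, Finset.mem_singleton, not_or] at hjT
          simp only [hm'def, if_neg hjT.2.2, if_neg hjT.2.1, if_neg hjT.1]
      have hm'1 : m' 1 = m 1 - 1 := by
        simp only [hm'def, if_neg (show (1:ℕ) ≠ i + 1 from by omega),
          if_neg (show (1:ℕ) ≠ i from by omega), if_pos rfl, if_true]
      have hm'i : m' i = m i - 1 := by
        simp only [hm'def, if_neg (show i ≠ i + 1 from by omega), if_pos rfl, if_true]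
      have hm'i1 : m' (i+1) = m (i+1) + 1 := by
        simp only [hm'def, if_pos rfl, if_true]
      have hT : (∏ j ∈ ({1, i, i+1} : Finset ℕ),
            (gfun (((n:ℝ)/ρ) * Q j * z ^ j) (m' j)
              / gfun (((n:ℝ)/ρ) * Q j * z ^ j) (m j)))
          = ((m 1 : ℝ) / (((n:ℝ)/ρ) * Q 1 * z ^ 1))
            * (((m i : ℝ) / (((n:ℝ)/ρ) * Q i * z ^ i))
              * ((((n:ℝ)/ρ) * Q (i+1) * z ^ (i+1)) / ((m (i+1) : ℝ) + 1))) := by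
        rw [Finset.prod_insert (by
            simp only [Finset.mem_insert, Finset.mem_singleton]; push_neg
            constructor <;> omega),
          Finset.prod_insert (by simp only [Finset.mem_singleton]; omega),
          Finset.prod_singleton, hm'1, hm'i, hm'i1,
          gfun_ratio_pred _ (hLpos 1 le_rfl) _ hm1,
          gfun_ratio_pred _ (hLpos i (by omega)) _ hmi,
          gfun_ratio_succ _ (hLpos (i+1) (by omega)) _]
      have hval : c' (i+1) = ((m (i+1) : ℝ) + 1) * (ρ/n) := by
        have h := hm' (i+1)
        rw [hm'i1] at h
        calc c' (i+1) = ((((n:ℝ)/ρ) * (ρ/(n:ℝ)))) * c' (i+1) := by rw [hκρ, one_mul]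
        _ = (ρ/(n:ℝ)) * (((n:ℝ)/ρ) * c' (i+1)) := by ring
        _ = (ρ/(n:ℝ)) * ((m (i+1) : ℝ) + 1) := by rw [h]; push_cast; ring
        _ = ((m (i+1) : ℝ) + 1) * (ρ/n) := by ring
      rw [hP, hP', hprod, hT, hval, hcj 1, hcj i, Qrec a b Q hQ1 hQ i (by omega), hQ1]
      have hb2 : b (i+1) ≠ 0 := ne_of_gt (hb (i+1) (by omega))
      have hz' : z ≠ 0 := ne_of_gt hz
      have hQine : Q i ≠ 0 := ne_of_gt (hQpos i (by omega))
      have hm1ne : (m 1 : ℝ) ≠ 0 := Nat.cast_ne_zero.mpr (by omega)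
      have hmine : (m i : ℝ) ≠ 0 := Nat.cast_ne_zero.mpr (by omega)
      have hm2ne : (m (i+1) : ℝ) + 1 ≠ 0 := by positivity
      have hρ' : ρ ≠ 0 := ne_of_gt hρ
      have hnne : (n:ℝ) ≠ 0 := ne_of_gt hn'
      have hB' : B ≠ 0 := ne_of_gt hB
      have hzi : z ^ i ≠ 0 := pow_ne_zero i hz'
      field_simp
      ring
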